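/- Let z ∈ ℂ with Im z > 0 and μ a Borel measure on ℝ with ∫ (1+λ²)⁻¹ dμ = 1. Define M(z) = ∫ (1/(λ-z) - λ/(1+λ²)) dμ(λ). Then (z-i)·∫ dμ(λ)/((λ-z)(λ-i)) = M(z) - i and (z+i)·∫ dμ(λ)/((λ-z)(λ+i)) = M(z) + i; consequently, ((z-i)·∫ dμ/((λ-z)(λ-i))) / ((z+i)·∫ dμ/((λ-z)(λ+i))) = (M(z)-i)/(M(z)+i). -/

import Mathlib

open MeasureTheory Complex

lemma wt_inv_le {a b C : ℝ} (ha : 0 < a) (hb : 0 < b) (h : b ≤ C * a) : a⁻¹ ≤ C * b⁻¹ := by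
  rw [inv_eq_one_div, inv_eq_one_div, mul_one_div, div_le_div_iff₀ ha hb]
  nlinarith

lemma wt_key (z : ℂ) (hz : 0 < z.im) :
    ∃ C : ℝ, 0 < C ∧ ∀ x : ℝ, Real.sqrt (1 + x ^ 2) ≤ C * ‖(x : ℂ) - z‖ := by
  set R : ℝ := max 2 ((1 + 2 * z.re ^ 2) / z.im ^ 2) with hR
  have hR2 : (2:ℝ) ≤ R := le_max_left _ _
  have hRpos : 0 < R := lt_of_lt_of_le two_pos hR2
  refine ⟨Real.sqrt R, Real.sqrt_pos.mpr hRpos, fun x => ?_⟩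
  have hns : Complex.normSq ((x : ℂ) - z) = (x - z.re) ^ 2 + z.im ^ 2 := by
    simp only [Complex.normSq_apply, Complex.sub_re, Complex.sub_im, Complex.ofReal_re,
      Complex.ofReal_im]
    ring
  rw [Complex.norm_def, hns, ← Real.sqrt_mul hRpos.le]
  apply Real.sqrt_le_sqrt
  have hd0 : ((1 + 2 * z.re ^ 2) / z.im ^ 2) * z.im ^ 2 = 1 + 2 * z.re ^ 2 :=
    div_mul_cancel₀ _ (by positivity)
  have hR3 : (1 + 2 * z.re ^ 2) / z.im ^ 2 ≤ R := le_max_right _ _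
  nlinarith [sq_nonneg (x - 2 * z.re), sq_nonneg (x - z.re), sq_nonneg z.im, hz,
    mul_le_mul_of_nonneg_right hR2 (sq_nonneg (x - z.re)),
    mul_le_mul_of_nonneg_right hR3 (sq_nonneg z.im)]

theorem livsic_via_weyl_titchmarsh
    (μ : Measure ℝ)
    (hnorm : ∫ x, (1 + x ^ 2)⁻¹ ∂μ = 1)
    (z : ℂ) (hz : 0 < z.im) :
    (z - I) * (∫ x, (((x : ℂ) - z) * ((x : ℂ) - I))⁻¹ ∂μ) =
        (∫ x, (((x : ℂ) - z)⁻¹ - (x : ℂ) / (1 + (x : ℂ) ^ 2)) ∂μ) - I ∧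
      (z + I) * (∫ x, (((x : ℂ) - z) * ((x : ℂ) + I))⁻¹ ∂μ) =
        (∫ x, (((x : ℂ) - z)⁻¹ - (x : ℂ) / (1 + (x : ℂ) ^ 2)) ∂μ) + I ∧
      ((z - I) * (∫ x, (((x : ℂ) - z) * ((x : ℂ) - I))⁻¹ ∂μ)) /
          ((z + I) * (∫ x, (((x : ℂ) - z) * ((x : ℂ) + I))⁻¹ ∂μ)) =
        ((∫ x, (((x : ℂ) - z)⁻¹ - (x : ℂ) / (1 + (x : ℂ) ^ 2)) ∂μ) - I) /
          ((∫ x, (((x : ℂ) - z)⁻¹ - (x : ℂ) / (1 + (x : ℂ) ^ 2)) ∂μ) + I) := by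
  -- nonvanishing facts
  have h1 : ∀ x : ℝ, (x : ℂ) - z ≠ 0 := by
    intro x h
    have := congrArg Complex.im h
    simp [sub_im, ofReal_im] at this
    rw [this] at hz; exact lt_irrefl _ hz
  have h2 : ∀ x : ℝ, (x : ℂ) - I ≠ 0 := by
    intro x h
    have := congrArg Complex.im h
    simp [sub_im, ofReal_im] at this
  have h3 : ∀ x : ℝ, (x : ℂ) + I ≠ 0 := by
    intro x h
    have := congrArg Complex.im h
    simp [add_im, ofReal_im] at this
  have h4 : ∀ x : ℝ, (1 : ℂ) + (x : ℂ) ^ 2 ≠ 0 := by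
    intro x
    have : (1 : ℂ) + (x : ℂ) ^ 2 = ((1 + x ^ 2 : ℝ) : ℂ) := by push_cast; ring
    rw [this]
    exact_mod_cast (by positivity : (1 + x ^ 2 : ℝ) ≠ 0)
  -- norms
  have habsI : ∀ x : ℝ, ‖(x : ℂ) - I‖ = Real.sqrt (1 + x ^ 2) := by
    intro x
    have hns : Complex.normSq ((x : ℂ) - I) = 1 + x ^ 2 := by
      simp only [Complex.normSq_apply, Complex.sub_re, Complex.sub_im, Complex.ofReal_re,
        Complex.ofReal_im, Complex.I_re, Complex.I_im]
      ring
    rw [Complex.norm_def, hns]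
  have habsI' : ∀ x : ℝ, ‖(x : ℂ) + I‖ = Real.sqrt (1 + x ^ 2) := by
    intro x
    have hns : Complex.normSq ((x : ℂ) + I) = 1 + x ^ 2 := by
      simp only [Complex.normSq_apply, Complex.add_re, Complex.add_im, Complex.ofReal_re,
        Complex.ofReal_im, Complex.I_re, Complex.I_im]
      ring
    rw [Complex.norm_def, hns]
  obtain ⟨C, hCpos, hC⟩ := wt_key z hz
  -- integrability of the weight
  have hgR : Integrable (fun x : ℝ => (1 + x ^ 2)⁻¹) μ := by
    by_contra h
    rw [integral_undef h] at hnorm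
    exact one_ne_zero hnorm.symm
  have hg0 : Integrable (fun x : ℝ => (((1 + x ^ 2)⁻¹ : ℝ) : ℂ)) μ := hgR.ofReal
  have hg : Integrable (fun x : ℝ => ((1 : ℂ) + (x : ℂ) ^ 2)⁻¹) μ := by
    refine hg0.congr (Filter.Eventually.of_forall fun x => ?_)
    push_cast
    ring
  have hgint : ∫ x, ((1 : ℂ) + (x : ℂ) ^ 2)⁻¹ ∂μ = 1 := by
    have heq : (fun x : ℝ => ((1 : ℂ) + (x : ℂ) ^ 2)⁻¹)
        = fun x : ℝ => (((1 + x ^ 2)⁻¹ : ℝ) : ℂ) := by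
      funext x; push_cast; ring
    have hoR : ∫ x, (((1 + x ^ 2)⁻¹ : ℝ) : ℂ) ∂μ = ((∫ x, (1 + x ^ 2)⁻¹ ∂μ : ℝ) : ℂ) :=
      integral_ofReal
    rw [heq, hoR, hnorm]
    norm_num
  -- positivity facts
  have hs : ∀ x : ℝ, 0 < Real.sqrt (1 + x ^ 2) := fun x => Real.sqrt_pos.mpr (by positivity)
  have hz0 : ∀ x : ℝ, 0 < ‖(x : ℂ) - z‖ := fun x => norm_pos_iff.mpr (h1 x)
  have hssq : ∀ x : ℝ, Real.sqrt (1 + x ^ 2) * Real.sqrt (1 + x ^ 2) = 1 + x ^ 2 := fun x =>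
    Real.mul_self_sqrt (by positivity)
  have hprod : ∀ x : ℝ, 1 + x ^ 2 ≤ C * (‖(x : ℂ) - z‖ * Real.sqrt (1 + x ^ 2)) := by
    intro x
    calc 1 + x ^ 2 = Real.sqrt (1 + x ^ 2) * Real.sqrt (1 + x ^ 2) := (hssq x).symm
      _ ≤ (C * ‖(x : ℂ) - z‖) * Real.sqrt (1 + x ^ 2) :=
          mul_le_mul_of_nonneg_right (hC x) (hs x).le
      _ = C * (‖(x : ℂ) - z‖ * Real.sqrt (1 + x ^ 2)) := by ring
  -- integrability of f1, f2
  have hf1 : Integrable (fun x : ℝ => (((x : ℂ) - z) * ((x : ℂ) - I))⁻¹) μ := by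
    refine ((hgR.const_mul C).mono' ?_ (Filter.Eventually.of_forall fun x => ?_))
    · apply Continuous.aestronglyMeasurable
      exact ((Complex.continuous_ofReal.sub continuous_const).mul
        (Complex.continuous_ofReal.sub continuous_const)).inv₀
        (fun x => mul_ne_zero (h1 x) (h2 x))
    · rw [norm_inv, norm_mul, habsI]
      exact wt_inv_le (mul_pos (hz0 x) (hs x)) (by positivity) (hprod x)
  have hf2 : Integrable (fun x : ℝ => (((x : ℂ) - z) * ((x : ℂ) + I))⁻¹) μ := by
    refine ((hgR.const_mul C).mono' ?_ (Filter.Eventually.of_forall fun x => ?_))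
    · apply Continuous.aestronglyMeasurable
      exact ((Complex.continuous_ofReal.sub continuous_const).mul
        (Complex.continuous_ofReal.add continuous_const)).inv₀
        (fun x => mul_ne_zero (h1 x) (h3 x))
    · rw [norm_inv, norm_mul, habsI']
      exact wt_inv_le (mul_pos (hz0 x) (hs x)) (by positivity) (hprod x)
  -- integrability of f3
  have hf3 : Integrable (fun x : ℝ => ((x : ℂ) - z)⁻¹ - (x : ℂ) / (1 + (x : ℂ) ^ 2)) μ := by
    refine ((hgR.const_mul (C * (1 + ‖z‖) * Real.sqrt 2)).mono' ?_
      (Filter.Eventually.of_forall fun x => ?_))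
    · apply Continuous.aestronglyMeasurable
      apply Continuous.sub
      · exact (Complex.continuous_ofReal.sub continuous_const).inv₀ h1
      · exact Continuous.div Complex.continuous_ofReal
          (continuous_const.add (Complex.continuous_ofReal.pow 2)) h4
    · have hrw : ((x : ℂ) - z)⁻¹ - (x : ℂ) / (1 + (x : ℂ) ^ 2)
          = (1 + (x : ℂ) * z) / (((x : ℂ) - z) * (1 + (x : ℂ) ^ 2)) := by
        field_simp [h1 x, h4 x]
        ring
      rw [hrw, norm_div, norm_mul]
      have habs4 : ‖1 + (x : ℂ) ^ 2‖ = 1 + x ^ 2 := by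
        have he : (1 : ℂ) + (x : ℂ) ^ 2 = ((1 + x ^ 2 : ℝ) : ℂ) := by push_cast; ring
        rw [he, Complex.norm_real, Real.norm_eq_abs, abs_of_pos (by positivity)]
      rw [habs4, div_le_iff₀ (mul_pos (hz0 x) (by positivity : (0:ℝ) < 1 + x ^ 2))]
      have hnum : ‖1 + (x : ℂ) * z‖ ≤ 1 + |x| * ‖z‖ := by
        calc ‖1 + (x : ℂ) * z‖ ≤ ‖1‖ + ‖(x : ℂ) * z‖ :=
              norm_add_le _ _
          _ = 1 + |x| * ‖z‖ := by rw [norm_one, norm_mul, Complex.norm_real, Real.norm_eq_abs]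
      have hxs : |x| ≤ Real.sqrt (1 + x ^ 2) := by
        rw [← Real.sqrt_sq_eq_abs]
        exact Real.sqrt_le_sqrt (by nlinarith [sq_nonneg x])
      have h1s : (1 : ℝ) ≤ Real.sqrt (1 + x ^ 2) := by
        nlinarith [hssq x, (hs x).le, sq_nonneg (Real.sqrt (1 + x ^ 2) - 1), sq_nonneg x]
      have h2s : (1 : ℝ) ≤ Real.sqrt 2 := by
        nlinarith [Real.sq_sqrt (by norm_num : (0:ℝ) ≤ 2), Real.sqrt_nonneg 2,
          sq_nonneg (Real.sqrt 2 - 1)]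
      have hza : 0 ≤ ‖z‖ := norm_nonneg z
      have hx2 : 1 + |x| * ‖z‖
          ≤ (1 + ‖z‖) * (Real.sqrt 2 * Real.sqrt (1 + x ^ 2)) := by
        nlinarith [mul_le_mul_of_nonneg_left hxs hza, (hs x).le, abs_nonneg x, h1s,
          mul_le_mul_of_nonneg_right h2s
            (mul_nonneg (by positivity : (0:ℝ) ≤ 1 + ‖z‖) (hs x).le)]
      have hfin : (1 + ‖z‖) * (Real.sqrt 2 * (C * ‖(x : ℂ) - z‖))
          = C * (1 + ‖z‖) * Real.sqrt 2 * (1 + x ^ 2)⁻¹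
            * (‖(x : ℂ) - z‖ * (1 + x ^ 2)) := by
        have hne : (1 + x ^ 2 : ℝ) ≠ 0 := by positivity
        field_simp
      calc ‖1 + (x : ℂ) * z‖ ≤ 1 + |x| * ‖z‖ := hnum
        _ ≤ (1 + ‖z‖) * (Real.sqrt 2 * Real.sqrt (1 + x ^ 2)) := hx2
        _ ≤ (1 + ‖z‖) * (Real.sqrt 2 * (C * ‖(x : ℂ) - z‖)) := by
            apply mul_le_mul_of_nonneg_left _ (by positivity)
            exact mul_le_mul_of_nonneg_left (hC x) (by positivity)
        _ = C * (1 + ‖z‖) * Real.sqrt 2 * (1 + x ^ 2)⁻¹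
            * (‖(x : ℂ) - z‖ * (1 + x ^ 2)) := hfin
  -- main identities
  have key1 : (z - I) * (∫ x, (((x : ℂ) - z) * ((x : ℂ) - I))⁻¹ ∂μ) =
      (∫ x, (((x : ℂ) - z)⁻¹ - (x : ℂ) / (1 + (x : ℂ) ^ 2)) ∂μ) - I := by
    calc (z - I) * (∫ x, (((x : ℂ) - z) * ((x : ℂ) - I))⁻¹ ∂μ)
        = ∫ x, (z - I) * (((x : ℂ) - z) * ((x : ℂ) - I))⁻¹ ∂μ := (integral_const_mul _ _).symm
      _ = ∫ x, ((((x : ℂ) - z)⁻¹ - (x : ℂ) / (1 + (x : ℂ) ^ 2))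
            - I * ((1 : ℂ) + (x : ℂ) ^ 2)⁻¹) ∂μ := by
          apply integral_congr_ae
          refine Filter.Eventually.of_forall fun x => ?_
          field_simp [h1 x, h2 x, h4 x]
          ring_nf
          simp only [Complex.I_sq]
          ring
      _ = (∫ x, (((x : ℂ) - z)⁻¹ - (x : ℂ) / (1 + (x : ℂ) ^ 2)) ∂μ)
          - ∫ x, I * ((1 : ℂ) + (x : ℂ) ^ 2)⁻¹ ∂μ := integral_sub hf3 (hg.const_mul I)
      _ = (∫ x, (((x : ℂ) - z)⁻¹ - (x : ℂ) / (1 + (x : ℂ) ^ 2)) ∂μ) - I := by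
          rw [integral_const_mul, hgint, mul_one]
  have key2 : (z + I) * (∫ x, (((x : ℂ) - z) * ((x : ℂ) + I))⁻¹ ∂μ) =
      (∫ x, (((x : ℂ) - z)⁻¹ - (x : ℂ) / (1 + (x : ℂ) ^ 2)) ∂μ) + I := by
    calc (z + I) * (∫ x, (((x : ℂ) - z) * ((x : ℂ) + I))⁻¹ ∂μ)
        = ∫ x, (z + I) * (((x : ℂ) - z) * ((x : ℂ) + I))⁻¹ ∂μ := (integral_const_mul _ _).symm
      _ = ∫ x, ((((x : ℂ) - z)⁻¹ - (x : ℂ) / (1 + (x : ℂ) ^ 2))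
            + I * ((1 : ℂ) + (x : ℂ) ^ 2)⁻¹) ∂μ := by
          apply integral_congr_ae
          refine Filter.Eventually.of_forall fun x => ?_
          field_simp [h1 x, h3 x, h4 x]
          ring_nf
          simp only [Complex.I_sq]
          ring
      _ = (∫ x, (((x : ℂ) - z)⁻¹ - (x : ℂ) / (1 + (x : ℂ) ^ 2)) ∂μ)
          + ∫ x, I * ((1 : ℂ) + (x : ℂ) ^ 2)⁻¹ ∂μ := integral_add hf3 (hg.const_mul I)
      _ = (∫ x, (((x : ℂ) - z)⁻¹ - (x : ℂ) / (1 + (x : ℂ) ^ 2)) ∂μ) + I := by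
          rw [integral_const_mul, hgint, mul_one]
  exact ⟨key1, key2, by rw [key1, key2]⟩
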